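/- Let H ≥ 1 and let C, k, r ≥ 1 be fixed. Then Σ_{h≤H} Π_{i=1}^r ( |L_i(h)| / φ(|L_i(h)|) )^k ≪_{r,k,C} H, uniformly over all linear functions L_i(h) = a_i h + b_i with integer coefficients a_i, b_i ∈ [−C, C], where the convention 0/φ(0) = 0 is used and φ is Euler's totient function. -/

import Mathlib

open Finset

/-- `|m|/φ(|m|)`, with the convention that this is `0` when `m = 0`
(note `φ(0) = 0` and `0/0 = 0` in Lean, so no case split is needed). -/
noncomputable def totientRatio (m : ℤ) : ℝ :=
  (m.natAbs : ℝ) / (m.natAbs.totient : ℝ)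


lemma myPowBound : ∀ (K : ℕ) (x : ℝ), 0 ≤ x → x ≤ 1 → (1+x)^K ≤ 1 + ((2:ℝ)^K - 1)*x := by
  intro K
  induction K with
  | zero => intro x hx hx1; simp
  | succ K ih =>
    intro x hx hx1
    have h := ih x hx hx1
    have h2 : (1+x)^(K+1) = (1+x)^K * (1+x) := by ring
    have h3 : (1+x)^K * (1+x) ≤ (1 + ((2:ℝ)^K - 1)*x) * (1+x) := by
      apply mul_le_mul_of_nonneg_right h (by linarith)
    have hx2 : x * x ≤ x := by nlinarith
    have h4 : (1 + ((2:ℝ)^K - 1)*x) * (1+x) ≤ 1 + ((2:ℝ)^(K+1) - 1)*x := by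
      have h2K : (1:ℝ) ≤ 2^K := one_le_pow₀ (by norm_num)
      have : ((2:ℝ)^K - 1) * (x*x) ≤ ((2:ℝ)^K - 1) * x := by
        apply mul_le_mul_of_nonneg_left hx2 (by linarith)
      calc (1 + ((2:ℝ)^K - 1)*x) * (1+x) = 1 + 2^K * x + ((2:ℝ)^K-1)*(x*x) := by ring
        _ ≤ 1 + 2^K*x + ((2:ℝ)^K - 1)*x := by linarith
        _ = 1 + ((2:ℝ)^(K+1) - 1)*x := by ring
    linarith

lemma squarefree_prod_primes {t : Finset ℕ} (ht : ∀ p ∈ t, p.Prime) :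
    Squarefree (∏ p ∈ t, p) := by
  classical
  induction t using Finset.cons_induction with
  | empty => simpa using squarefree_one
  | cons p s hp ih =>
    rw [Finset.prod_cons]
    have hpp : p.Prime := ht p (Finset.mem_cons_self p s)
    have hcop : p.Coprime (∏ q ∈ s, q) := by
      apply Nat.Coprime.prod_right
      intro q hq
      exact (Nat.coprime_primes hpp (ht q (Finset.mem_cons_of_mem hq))).2
        (fun h => hp (h ▸ hq))
    exact (Nat.squarefree_mul hcop).2 ⟨hpp.squarefree,
      ih (fun q hq => ht q (Finset.mem_cons_of_mem hq))⟩

noncomputable def gfun (K d : ℕ) : ℝ :=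
  ((2:ℝ)^K)^(d.primeFactors.card) / ∏ p ∈ d.primeFactors, ((p:ℝ)-1)

lemma prod_sub_one_pos (d : ℕ) : 0 < ∏ p ∈ d.primeFactors, ((p:ℝ)-1) := by
  apply Finset.prod_pos
  intro p hp
  have := (Nat.prime_of_mem_primeFactors hp).two_le
  have : (2:ℝ) ≤ p := by exact_mod_cast this
  linarith

lemma gfun_nonneg (K d : ℕ) : 0 ≤ gfun K d := by
  apply div_nonneg (pow_nonneg (pow_nonneg (by norm_num) _) _) (prod_sub_one_pos d).le


lemma ratio_eq_prod (n : ℕ) (hn : 1 ≤ n) :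
    (n:ℝ)/(n.totient:ℝ) = ∏ p ∈ n.primeFactors, (p:ℝ)/((p:ℝ)-1) := by
  have key := Nat.totient_mul_prod_primeFactors n
  have hφ : 0 < n.totient := Nat.totient_pos.2 hn
  have hcast : ∀ p ∈ n.primeFactors, ((p - 1 : ℕ) : ℝ) = (p:ℝ) - 1 := fun p hp => by
    have := (Nat.prime_of_mem_primeFactors hp).one_lt
    push_cast [Nat.cast_sub this.le]; ring
  have hkey : (n.totient : ℝ) * ∏ p ∈ n.primeFactors, (p:ℝ) =
      (n:ℝ) * ∏ p ∈ n.primeFactors, ((p:ℝ)-1) := by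
    have h := congrArg (fun m : ℕ => (m : ℝ)) key
    push_cast at h
    rwa [Finset.prod_congr rfl hcast] at h
  have hP : 0 < ∏ p ∈ n.primeFactors, (p:ℝ) := by
    apply Finset.prod_pos; intro p hp
    exact_mod_cast (Nat.prime_of_mem_primeFactors hp).pos
  have hQ : 0 < ∏ p ∈ n.primeFactors, ((p:ℝ)-1) := by
    apply Finset.prod_pos; intro p hp
    have : (2:ℝ) ≤ p := by exact_mod_cast (Nat.prime_of_mem_primeFactors hp).two_le
    linarith
  rw [Finset.prod_div_distrib]
  rw [div_eq_div_iff (by positivity : (0:ℝ) < (n.totient:ℝ)).ne' hQ.ne']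
  linarith [hkey]

lemma pointwise (K n : ℕ) (hn : 1 ≤ n) :
    ((n:ℝ)/(n.totient:ℝ))^K ≤
      ∑ t ∈ n.primeFactors.powerset, ((2:ℝ)^K)^(t.card) / ∏ p ∈ t, ((p:ℝ)-1) := by
  rw [ratio_eq_prod n hn, ← Finset.prod_pow]
  have step1 : ∀ p ∈ n.primeFactors, ((p:ℝ)/((p:ℝ)-1))^K ≤ (2:ℝ)^K/((p:ℝ)-1) + 1 := by
    intro p hp
    have h2 : (2:ℝ) ≤ p := by exact_mod_cast (Nat.prime_of_mem_primeFactors hp).two_le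
    have hp1 : (1:ℝ) ≤ (p:ℝ) - 1 := by linarith
    have hx0 : 0 ≤ 1/((p:ℝ)-1) := by positivity
    have hx1 : 1/((p:ℝ)-1) ≤ 1 := by rw [div_le_one (by linarith)]; linarith
    have heq : (p:ℝ)/((p:ℝ)-1) = 1 + 1/((p:ℝ)-1) := by field_simp; ring
    rw [heq]
    calc (1 + 1/((p:ℝ)-1))^K ≤ 1 + ((2:ℝ)^K - 1) * (1/((p:ℝ)-1)) :=
          myPowBound K _ hx0 hx1
      _ ≤ (2:ℝ)^K/((p:ℝ)-1) + 1 := by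
          have h2K : (1:ℝ) ≤ 2^K := one_le_pow₀ (by norm_num)
          rw [mul_one_div]
          have : ((2:ℝ)^K - 1)/((p:ℝ)-1) ≤ (2:ℝ)^K/((p:ℝ)-1) := by
            gcongr <;> linarith
          linarith
  have step2 : ∏ p ∈ n.primeFactors, ((p:ℝ)/((p:ℝ)-1))^K ≤
      ∏ p ∈ n.primeFactors, ((2:ℝ)^K/((p:ℝ)-1) + 1) := by
    apply Finset.prod_le_prod
    · intro p hp
      have h2 : (2:ℝ) ≤ p := by exact_mod_cast (Nat.prime_of_mem_primeFactors hp).two_le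
      exact pow_nonneg (div_nonneg (by linarith) (by linarith)) _
    · exact step1
  refine step2.trans ?_
  rw [Finset.prod_add]
  apply le_of_eq
  apply Finset.sum_congr rfl
  intro t ht
  rw [Finset.prod_const_one, mul_one, Finset.prod_div_distrib, Finset.prod_const]


lemma sqrt_prod_nat (s : Finset ℕ) :
    Real.sqrt (∏ p ∈ s, (p:ℝ)) = ∏ p ∈ s, Real.sqrt p := by
  classical
  induction s using Finset.cons_induction with
  | empty => simp
  | cons p s hp ih =>
    rw [Finset.prod_cons, Finset.prod_cons, Real.sqrt_mul (by positivity), ih]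

noncomputable def Bc (K : ℕ) : ℝ := ((2:ℝ)^(K+1))^(4^(K+1))

lemma Bc_pos (K : ℕ) : 0 < Bc K := by unfold Bc; positivity

lemma gfun_le (K d : ℕ) (hd : Squarefree d) (hd1 : 1 ≤ d) :
    gfun K d ≤ Bc K * Real.sqrt d / d := by
  classical
  set P := d.primeFactors with hP
  have hprime : ∀ p ∈ P, p.Prime := fun p hp => Nat.prime_of_mem_primeFactors hp
  have hprodd : ∏ p ∈ P, p = d := Nat.prod_primeFactors_of_squarefree hd
  have hd0 : (0:ℝ) < d := by exact_mod_cast hd1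
  -- ∏ (p-1) ≥ d / 2^|P|
  have hlow : (d:ℝ) / (2:ℝ)^P.card ≤ ∏ p ∈ P, ((p:ℝ)-1) := by
    have : ∏ p ∈ P, ((p:ℝ)/2) ≤ ∏ p ∈ P, ((p:ℝ)-1) := by
      apply Finset.prod_le_prod
      · intro p hp
        have : (2:ℝ) ≤ p := by exact_mod_cast (hprime p hp).two_le
        positivity
      · intro p hp
        have : (2:ℝ) ≤ p := by exact_mod_cast (hprime p hp).two_le
        linarith
    calc (d:ℝ)/(2:ℝ)^P.card = (∏ p ∈ P, (p:ℝ)) / (2:ℝ)^P.card := by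
          rw [← hprodd]; push_cast; ring_nf
      _ = ∏ p ∈ P, ((p:ℝ)/2) := by
          rw [Finset.prod_div_distrib, Finset.prod_const]
      _ ≤ _ := this
  -- (2^(K+1))^|P| ≤ Bc K * sqrt d
  have hup : ((2:ℝ)^(K+1))^P.card ≤ Bc K * Real.sqrt d := by
    set Q : ℝ := (2:ℝ)^(K+1) with hQ
    have hQ1 : (1:ℝ) ≤ Q := one_le_pow₀ (by norm_num)
    have hsplit : ((2:ℝ)^(K+1))^P.card = ∏ p ∈ P, Q := by
      rw [Finset.prod_const]
    rw [hsplit, ← Finset.prod_filter_mul_prod_filter_not P (fun p => p ≤ 4^(K+1))]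
    have h1 : ∏ p ∈ P.filter (fun p => p ≤ 4^(K+1)), Q ≤ Bc K := by
      rw [Finset.prod_const]
      apply pow_le_pow_right₀ hQ1
      calc (P.filter (fun p => p ≤ 4^(K+1))).card ≤ (Finset.Icc 1 (4^(K+1))).card := by
            apply Finset.card_le_card
            intro p hp
            rw [Finset.mem_filter] at hp
            rw [Finset.mem_Icc]
            exact ⟨(hprime p hp.1).one_lt.le, hp.2⟩
        _ = 4^(K+1) := by simp
    have h2 : ∏ p ∈ P.filter (fun p => ¬ p ≤ 4^(K+1)), Q ≤ Real.sqrt d := by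
      have step : ∏ p ∈ P.filter (fun p => ¬ p ≤ 4^(K+1)), Q ≤
          ∏ p ∈ P.filter (fun p => ¬ p ≤ 4^(K+1)), Real.sqrt p := by
        apply Finset.prod_le_prod (fun _ _ => by positivity)
        intro p hp
        rw [Finset.mem_filter] at hp
        have hpQ : (4:ℕ)^(K+1) < p := by omega
        have hQ2 : Q^2 = (4:ℝ)^(K+1) := by
          rw [hQ, ← pow_mul, mul_comm]
          norm_num [pow_mul]
        have : Q^2 < (p:ℝ) := by rw [hQ2]; exact_mod_cast hpQ
        have hQ0 : 0 ≤ Q := by positivity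
        nlinarith [Real.sq_sqrt (le_of_lt (lt_of_le_of_lt (by positivity) this)),
          Real.sqrt_nonneg (p:ℝ)]
      refine step.trans ?_
      have hsub : ∏ p ∈ P.filter (fun p => ¬ p ≤ 4^(K+1)), Real.sqrt p ≤
          ∏ p ∈ P, Real.sqrt p := by
        rw [← Finset.prod_filter_mul_prod_filter_not P (fun p => p ≤ 4^(K+1))
          (fun p => Real.sqrt p)]
        have hone : (1:ℝ) ≤ ∏ p ∈ P.filter (fun p => p ≤ 4^(K+1)), Real.sqrt p := by
          rw [show (1:ℝ) = ∏ _p ∈ P.filter (fun p => p ≤ 4^(K+1)), (1:ℝ) by simp]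
          refine Finset.prod_le_prod (fun _ _ => zero_le_one) (fun p hp => ?_)
          have h1p : (1:ℝ) ≤ p := by
            exact_mod_cast (hprime p (Finset.mem_filter.1 hp).1).one_lt.le
          rw [show (1:ℝ) = Real.sqrt 1 by simp]
          exact Real.sqrt_le_sqrt h1p
        exact le_mul_of_one_le_left (Finset.prod_nonneg (fun _ _ => by positivity)) hone
      refine hsub.trans (le_of_eq ?_)
      rw [← sqrt_prod_nat P, ← hprodd]
      push_cast
      rfl
    exact mul_le_mul h1 h2 (Finset.prod_nonneg (fun _ _ => by positivity)) (Bc_pos K).le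
  -- combine
  have hprodpos : (0:ℝ) < ∏ p ∈ P, ((p:ℝ)-1) := by
    apply Finset.prod_pos
    intro p hp
    have : (2:ℝ) ≤ p := by exact_mod_cast (hprime p hp).two_le
    linarith
  have h2c : (d:ℝ) ≤ 2^P.card * ∏ p ∈ P, ((p:ℝ)-1) := by
    rw [div_le_iff₀ (by positivity)] at hlow
    linarith [hlow]
  have hPle : gfun K d ≤ ((2:ℝ)^(K+1))^P.card / d := by
    unfold gfun
    rw [div_le_div_iff₀ (by positivity) hd0]
    calc ((2:ℝ)^K)^P.card * d ≤ ((2:ℝ)^K)^P.card * (2^P.card * ∏ p ∈ P, ((p:ℝ)-1)) := by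
          apply mul_le_mul_of_nonneg_left h2c (by positivity)
      _ = ((2:ℝ)^(K+1))^P.card * ∏ p ∈ P, ((p:ℝ)-1) := by
          rw [pow_succ, mul_pow]; ring
  refine hPle.trans ?_
  gcongr


lemma counting (a b : ℤ) (ha : a ≠ 0) (C N d : ℕ) (hC : |a| ≤ (C:ℤ)) (hd : 1 ≤ d) :
    (((Icc 1 N).filter (fun h : ℕ => (d:ℤ) ∣ a*(h:ℤ)+b)).card : ℝ) ≤ (C:ℝ)*N/d + 1 := by
  classical
  set E := (Icc 1 N).filter (fun h : ℕ => (d:ℤ) ∣ a*(h:ℤ)+b) with hE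
  have hd0 : (0:ℝ) < d := by exact_mod_cast hd
  have hC0 : (0:ℝ) < C := by
    have : (1:ℤ) ≤ |a| := Int.one_le_abs (by simpa using ha)
    have : (1:ℤ) ≤ C := le_trans this hC
    exact_mod_cast this
  rcases E.eq_empty_or_nonempty with he | hne
  · rw [he]; simp; positivity
  set m := E.min' hne with hm
  have hmE : m ∈ E := E.min'_mem hne
  set g := Nat.gcd a.natAbs d with hg
  have hana : 1 ≤ a.natAbs := by
    rwa [Nat.one_le_iff_ne_zero, Int.natAbs_ne_zero]
  have hgpos : 0 < g := Nat.gcd_pos_of_pos_right _ hd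
  have hgd : g ∣ d := Nat.gcd_dvd_right _ _
  have hga : g ∣ a.natAbs := Nat.gcd_dvd_left _ _
  set e := d / g with he'
  have heg : e * g = d := Nat.div_mul_cancel hgd
  have hepos : 0 < e := Nat.div_pos (Nat.le_of_dvd (by omega) hgd) hgpos
  -- key divisibility
  have key : ∀ h ∈ E, m ≤ h ∧ e ∣ (h - m) := by
    intro h hh
    have hmle : m ≤ h := E.min'_le h hh
    refine ⟨hmle, ?_⟩
    have hdh : (d:ℤ) ∣ a*(h:ℤ)+b := (Finset.mem_filter.1 hh).2
    have hdm : (d:ℤ) ∣ a*(m:ℤ)+b := (Finset.mem_filter.1 hmE).2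
    have hdiff : (d:ℤ) ∣ a*((h:ℤ) - (m:ℤ)) := by
      have := dvd_sub hdh hdm
      simpa [mul_sub] using this
    have hcast : ((h - m : ℕ) : ℤ) = (h:ℤ) - (m:ℤ) := by
      exact_mod_cast Int.ofNat_sub hmle
    have hdvd_nat : d ∣ a.natAbs * (h - m) := by
      have : (d:ℤ) ∣ (a*((h:ℤ)-(m:ℤ))).natAbs := by
        rw [Int.dvd_natAbs]; exact hdiff
      have h2 : (a*((h:ℤ)-(m:ℤ))).natAbs = a.natAbs * (h-m) := by
        rw [Int.natAbs_mul, ← hcast, Int.natAbs_natCast]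
      exact_mod_cast h2 ▸ this
    -- e ∣ h - m
    have hcop : (e).Coprime (a.natAbs / g) := by
      rw [he', hg, Nat.coprime_comm]
      exact Nat.coprime_div_gcd_div_gcd hgpos
    have : e ∣ (a.natAbs / g) * (h - m) := by
      have h1 : e * g ∣ (a.natAbs / g * (h-m)) * g := by
        rw [heg, mul_comm (a.natAbs / g) (h-m), mul_assoc, Nat.div_mul_cancel hga,
          mul_comm (h-m) _]
        exact hdvd_nat
      exact (Nat.mul_dvd_mul_iff_right hgpos).1 h1
    exact Nat.Coprime.dvd_of_dvd_mul_right hcop (by rwa [mul_comm] at this)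
  -- injection into range
  have hcard : E.card ≤ N / e + 1 := by
    have : E.card ≤ (Finset.range (N/e + 1)).card := by
      apply Finset.card_le_card_of_injOn (fun h => (h - m)/e)
      · intro h hh
        rw [Finset.mem_coe] at hh
        rw [Finset.mem_coe, Finset.mem_range]; beta_reduce
        have hhN : h ≤ N := (Finset.mem_Icc.1 (Finset.mem_filter.1 hh).1).2
        have : (h - m)/e ≤ N/e := Nat.div_le_div_right (by omega)
        omega
      · intro h1 h1h h2 h2h hfe
        obtain ⟨hm1, hd1⟩ := key h1 h1h
        obtain ⟨hm2, hd2⟩ := key h2 h2h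
        have e1 : (h1 - m)/e * e = h1 - m := Nat.div_mul_cancel hd1
        have e2 : (h2 - m)/e * e = h2 - m := Nat.div_mul_cancel hd2
        simp only at hfe
        rw [hfe, e2] at e1
        omega
    simpa using this
  -- convert to reals
  have h1 : ((N/e : ℕ) : ℝ) ≤ (N:ℝ)/e := Nat.cast_div_le
  have h2 : (N:ℝ)/e ≤ (C:ℝ)*N/d := by
    rw [div_le_div_iff₀ (by exact_mod_cast hepos) hd0]
    have hgC : (g:ℝ) ≤ (C:ℝ) := by
      have : g ≤ a.natAbs := Nat.le_of_dvd (by omega) hga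
      have h3 : (a.natAbs : ℤ) ≤ C := by rwa [Int.abs_eq_natAbs] at hC
      have : (g:ℤ) ≤ C := le_trans (by exact_mod_cast this) h3
      exact_mod_cast this
    have : (d:ℝ) = e * g := by exact_mod_cast heg.symm
    rw [this]
    have hN0 : (0:ℝ) ≤ N := Nat.cast_nonneg N
    have he0 : (0:ℝ) ≤ e := Nat.cast_nonneg e
    nlinarith [mul_nonneg (mul_nonneg hN0 he0) (sub_nonneg.2 hgC)]
  calc (E.card : ℝ) ≤ ((N/e + 1 : ℕ) : ℝ) := by exact_mod_cast hcard
    _ = ((N/e : ℕ) : ℝ) + 1 := by push_cast; ring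
    _ ≤ (C:ℝ)*N/d + 1 := by linarith


noncomputable def Tc : ℝ := ∑' d : ℕ, (d:ℝ)^(-(3/2) : ℝ)

lemma Tc_summable : Summable (fun d : ℕ => (d:ℝ)^(-(3/2) : ℝ)) :=
  Real.summable_nat_rpow.mpr (by norm_num)

lemma Tc_nonneg : 0 ≤ Tc :=
  tsum_nonneg (fun d => Real.rpow_nonneg (Nat.cast_nonneg d) _)

lemma sum_rpow_le (s : Finset ℕ) : ∑ d ∈ s, (d:ℝ)^(-(3/2):ℝ) ≤ Tc :=
  Summable.sum_le_tsum s (fun d _ => Real.rpow_nonneg (Nat.cast_nonneg d) _) Tc_summable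

lemma sqrt_div_sq (d : ℕ) (hd : 1 ≤ d) :
    Real.sqrt d / ((d:ℝ)*(d:ℝ)) = (d:ℝ)^(-(3/2):ℝ) := by
  have hd0 : (0:ℝ) < d := by exact_mod_cast hd
  have hs : Real.sqrt d * Real.sqrt d = d := Real.mul_self_sqrt hd0.le
  have hs0 : (0:ℝ) < Real.sqrt d := Real.sqrt_pos.2 hd0
  rw [Real.rpow_neg hd0.le, show (3/2:ℝ) = 1 + 1/2 by norm_num, Real.rpow_add hd0,
    Real.rpow_one, ← Real.sqrt_eq_rpow]
  rw [div_eq_iff (by positivity : (↑d * (↑d:ℝ)) ≠ 0)]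
  rw [inv_mul_eq_div, eq_div_iff (by positivity : ((↑d:ℝ) * √↑d) ≠ 0)]
  nlinarith [hs]

noncomputable def K1 (C k' : ℕ) : ℝ :=
  (C:ℝ)^k' + (C:ℝ)*(Bc k')*Tc + 2*(C:ℝ)*(Bc k')

lemma K1_pos (C k' : ℕ) (hC : 1 ≤ C) : 0 < K1 C k' := by
  unfold K1
  have h1 : (1:ℝ) ≤ (C:ℝ) := by exact_mod_cast hC
  have := Bc_pos k'
  have := Tc_nonneg
  have : (0:ℝ) < (C:ℝ)^k' := by positivity
  nlinarith [Bc_pos k', Tc_nonneg, (by positivity : (0:ℝ) < (C:ℝ)*(Bc k'))]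

lemma tr_nonneg (m : ℤ) : 0 ≤ totientRatio m := by
  unfold totientRatio; positivity

lemma tr_le_abs (C : ℕ) (m : ℤ) (hm : |m| ≤ (C:ℤ)) : totientRatio m ≤ C := by
  unfold totientRatio
  rcases eq_or_ne m 0 with h | h
  · simp [h]
  · have h1 : 1 ≤ m.natAbs := by omega
    have hφ : 1 ≤ m.natAbs.totient := (Nat.totient_pos.2 h1)
    have : (1:ℝ) ≤ (m.natAbs.totient : ℝ) := by exact_mod_cast hφ
    have h2 : (m.natAbs : ℝ) ≤ C := by
      have : (m.natAbs : ℤ) ≤ C := by rwa [Int.abs_eq_natAbs] at hm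
      exact_mod_cast this
    calc (m.natAbs : ℝ) / (m.natAbs.totient : ℝ) ≤ (m.natAbs : ℝ) / 1 := by
          apply div_le_div_of_nonneg_left (by positivity) (by norm_num) this
      _ ≤ C := by simpa using h2

lemma single_form (C k' : ℕ) (hC : 1 ≤ C) (hk' : 1 ≤ k') (H : ℝ) (hH : 1 ≤ H)
    (a b : ℤ) (ha : |a| ≤ (C:ℤ)) (hb : |b| ≤ (C:ℤ)) :
    ∑ h ∈ Icc 1 ⌊H⌋₊, totientRatio (a*(h:ℤ)+b)^k' ≤ K1 C k' * H := by
  classical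
  set N := ⌊H⌋₊ with hN
  have hH0 : (0:ℝ) ≤ H := by linarith
  have hN1 : 1 ≤ N := Nat.le_floor (by exact_mod_cast hH)
  have hNH : (N:ℝ) ≤ H := Nat.floor_le hH0
  have hC1 : (1:ℝ) ≤ (C:ℝ) := by exact_mod_cast hC
  have hBc := Bc_pos k'
  have hTc := Tc_nonneg
  rcases eq_or_ne a 0 with ha0 | ha0
  · -- constant case
    have hterm : ∀ h ∈ Icc 1 N, totientRatio (a*(h:ℤ)+b)^k' ≤ (C:ℝ)^k' := by
      intro h _
      rw [ha0]
      simp only [zero_mul, zero_add]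
      exact pow_le_pow_left₀ (tr_nonneg b) (tr_le_abs C b hb) k'
    calc ∑ h ∈ Icc 1 N, totientRatio (a*(h:ℤ)+b)^k' ≤ ∑ _h ∈ Icc 1 N, (C:ℝ)^k' :=
          Finset.sum_le_sum hterm
      _ = (N:ℝ) * (C:ℝ)^k' := by
          rw [Finset.sum_const, Nat.card_Icc, Nat.add_sub_cancel, nsmul_eq_mul]
      _ ≤ H * (C:ℝ)^k' := by
          apply mul_le_mul_of_nonneg_right hNH (by positivity)
      _ ≤ K1 C k' * H := by
          unfold K1
          have hCB : (0:ℝ) ≤ (C:ℝ)*(Bc k')*Tc + 2*(C:ℝ)*(Bc k') := by positivity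
          nlinarith [pow_pos (lt_of_lt_of_le one_pos hC1) k']
  · -- main case
    set M := 2*C*N with hM
    set U := (Icc 1 M).filter Squarefree with hU
    -- Step 1: pointwise
    have step1 : ∀ h ∈ Icc 1 N, totientRatio (a*(h:ℤ)+b)^k' ≤
        ∑ d ∈ U, (if (d:ℤ) ∣ a*(h:ℤ)+b then gfun k' d else 0) := by
      intro h hh
      have hhN : h ≤ N := (Finset.mem_Icc.1 hh).2
      set n := (a*(h:ℤ)+b).natAbs with hn
      have hsum_nonneg : (0:ℝ) ≤ ∑ d ∈ U, (if (d:ℤ) ∣ a*(h:ℤ)+b then gfun k' d else 0) := by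
        apply Finset.sum_nonneg
        intro d _
        split
        · exact gfun_nonneg k' d
        · exact le_rfl
      rcases Nat.eq_zero_or_pos n with hn0 | hn1
      · have : totientRatio (a*(h:ℤ)+b) = 0 := by
          unfold totientRatio; rw [← hn, hn0]; simp
        rw [this, zero_pow (by omega)]
        exact hsum_nonneg
      -- n ≥ 1
      have hnM : n ≤ M := by
        have h1 : (n:ℤ) = |a*(h:ℤ)+b| := (Int.abs_eq_natAbs _).symm
        have h2 : |a*(h:ℤ)+b| ≤ |a| * (h:ℤ) + |b| := by
          calc |a*(h:ℤ)+b| ≤ |a*(h:ℤ)| + |b| := abs_add_le _ _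
            _ = |a| * (h:ℤ) + |b| := by
                rw [abs_mul, abs_of_nonneg (by positivity : (0:ℤ) ≤ (h:ℤ))]
        have hhN' : (h:ℤ) ≤ N := by exact_mod_cast hhN
        have ha1 : (0:ℤ) ≤ |a| := abs_nonneg a
        have hb1 : (0:ℤ) ≤ |b| := abs_nonneg b
        have hh0 : (0:ℤ) ≤ (h:ℤ) := by positivity
        have h3 : |a| * (h:ℤ) + |b| ≤ (C:ℤ)*N + C := by
          have : |a| * (h:ℤ) ≤ (C:ℤ) * N := by
            apply mul_le_mul ha hhN' hh0 (by omega)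
          omega
        have hN1' : (1:ℤ) ≤ (N:ℤ) := by exact_mod_cast hN1
        have hC1' : (1:ℤ) ≤ (C:ℤ) := by exact_mod_cast hC
        have h4 : (C:ℤ)*N + C ≤ 2*(C:ℤ)*N := by nlinarith
        have h5 : (n:ℤ) ≤ 2*(C:ℤ)*N := by omega
        have h6 : ((M:ℕ):ℤ) = 2*(C:ℤ)*N := by push_cast [hM]; ring
        omega
      have heq : totientRatio (a*(h:ℤ)+b) = (n:ℝ)/(n.totient:ℝ) := rfl
      rw [heq]
      refine (pointwise k' n hn1).trans ?_
      -- rewrite powerset sum as sum over image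
      have hprimes : ∀ t ∈ n.primeFactors.powerset, ∀ p ∈ t, p.Prime := by
        intro t ht p hp
        exact Nat.prime_of_mem_primeFactors (Finset.mem_powerset.1 ht hp)
      have hcongr : ∀ t ∈ n.primeFactors.powerset,
          ((2:ℝ)^k')^(t.card) / ∏ p ∈ t, ((p:ℝ)-1) = gfun k' (∏ p ∈ t, p) := by
        intro t ht
        unfold gfun
        rw [Nat.primeFactors_prod (hprimes t ht)]
      rw [Finset.sum_congr rfl hcongr]
      set I := n.primeFactors.powerset.image (fun t => ∏ p ∈ t, p) with hI
      have hinj : ∀ t1 ∈ n.primeFactors.powerset, ∀ t2 ∈ n.primeFactors.powerset,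
          (∏ p ∈ t1, p) = (∏ p ∈ t2, p) → t1 = t2 := by
        intro t1 h1 t2 h2 hprod
        have e1 : t1 = Nat.primeFactors (∏ p ∈ t1, p) := (Nat.primeFactors_prod (hprimes t1 h1)).symm
        rw [e1, hprod, Nat.primeFactors_prod (hprimes t2 h2)]
      have himg : ∑ d ∈ I, gfun k' d = ∑ t ∈ n.primeFactors.powerset, gfun k' (∏ p ∈ t, p) :=
        Finset.sum_image hinj
      rw [← himg]
      have hmem : ∀ d ∈ I, d ∈ U ∧ (d:ℤ) ∣ a*(h:ℤ)+b := by
        intro d hd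
        obtain ⟨t, ht, rfl⟩ := Finset.mem_image.1 hd
        have hdvd_n : (∏ p ∈ t, p) ∣ n := by
          calc (∏ p ∈ t, p) ∣ ∏ p ∈ n.primeFactors, p :=
                Finset.prod_dvd_prod_of_subset _ _ _ (Finset.mem_powerset.1 ht)
            _ ∣ n := Nat.prod_primeFactors_dvd n
        have hd1 : 1 ≤ ∏ p ∈ t, p := Nat.one_le_iff_ne_zero.2 (by
          intro h0
          exact Nat.pos_iff_ne_zero.1 hn1 (Nat.eq_zero_of_zero_dvd (h0 ▸ hdvd_n)))
        have hdM : (∏ p ∈ t, p) ≤ M := le_trans (Nat.le_of_dvd hn1 hdvd_n) hnM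
        refine ⟨Finset.mem_filter.2 ⟨Finset.mem_Icc.2 ⟨hd1, hdM⟩,
          squarefree_prod_primes (hprimes t ht)⟩, ?_⟩
        rw [← Int.dvd_natAbs, ← hn]
        exact_mod_cast hdvd_n
      calc ∑ d ∈ I, gfun k' d = ∑ d ∈ I, (if (d:ℤ) ∣ a*(h:ℤ)+b then gfun k' d else 0) := by
            apply Finset.sum_congr rfl
            intro d hd
            rw [if_pos (hmem d hd).2]
        _ ≤ ∑ d ∈ U, (if (d:ℤ) ∣ a*(h:ℤ)+b then gfun k' d else 0) := by
            apply Finset.sum_le_sum_of_subset_of_nonneg (fun d hd => (hmem d hd).1)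
            intro d _ _
            split
            · exact gfun_nonneg k' d
            · exact le_rfl
    -- Step 2: swap and count
    have step2 : ∑ h ∈ Icc 1 N, totientRatio (a*(h:ℤ)+b)^k' ≤
        ∑ d ∈ U, gfun k' d * (((Icc 1 N).filter (fun h : ℕ => (d:ℤ) ∣ a*(h:ℤ)+b)).card : ℝ) := by
      refine (Finset.sum_le_sum step1).trans ?_
      rw [Finset.sum_comm]
      apply le_of_eq
      apply Finset.sum_congr rfl
      intro d _
      rw [← Finset.sum_filter, Finset.sum_const, nsmul_eq_mul, mul_comm]
    -- Step 3: bound everything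
    have step3 : ∀ d ∈ U, gfun k' d *
        (((Icc 1 N).filter (fun h : ℕ => (d:ℤ) ∣ a*(h:ℤ)+b)).card : ℝ) ≤
        (C:ℝ)*N*(Bc k')*((d:ℝ)^(-(3/2):ℝ)) + Bc k' := by
      intro d hd
      obtain ⟨hdIcc, hdsq⟩ := Finset.mem_filter.1 hd
      obtain ⟨hd1, hdM⟩ := Finset.mem_Icc.1 hdIcc
      have hd0 : (0:ℝ) < d := by exact_mod_cast hd1
      have hgd := gfun_le k' d hdsq hd1
      have hcount := counting a b ha0 C N d ha hd1
      have hsqrt1 : (1:ℝ) ≤ Real.sqrt d := by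
        rw [show (1:ℝ) = Real.sqrt 1 by simp]
        exact Real.sqrt_le_sqrt (by exact_mod_cast hd1)
      have hs0 : (0:ℝ) < Real.sqrt d := by linarith
      calc gfun k' d * (((Icc 1 N).filter (fun h : ℕ => (d:ℤ) ∣ a*(h:ℤ)+b)).card : ℝ)
          ≤ (Bc k' * Real.sqrt d / d) * ((C:ℝ)*N/d + 1) := by
            apply mul_le_mul hgd hcount (Nat.cast_nonneg _) (by positivity)
        _ = (C:ℝ)*N*(Bc k')*(Real.sqrt d/((d:ℝ)*(d:ℝ))) + Bc k' * (Real.sqrt d / d) := by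
            field_simp
        _ ≤ (C:ℝ)*N*(Bc k')*((d:ℝ)^(-(3/2):ℝ)) + Bc k' := by
            rw [sqrt_div_sq d hd1]
            have hsd : Real.sqrt d / d ≤ 1 := by
              rw [div_le_one hd0]
              nlinarith [Real.mul_self_sqrt hd0.le]
            nlinarith [Bc_pos k']
    -- assemble
    have hsum3 : ∑ d ∈ U, ((C:ℝ)*N*(Bc k')*((d:ℝ)^(-(3/2):ℝ)) + Bc k') ≤
        (C:ℝ)*N*(Bc k')*Tc + Bc k' * M := by
      rw [Finset.sum_add_distrib, ← Finset.mul_sum, Finset.sum_const, nsmul_eq_mul]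
      have h1 : ∑ d ∈ U, (d:ℝ)^(-(3/2):ℝ) ≤ Tc := sum_rpow_le U
      have h2 : (U.card : ℝ) ≤ M := by
        have : U.card ≤ M := by
          calc U.card ≤ (Icc 1 M).card := Finset.card_le_card (Finset.filter_subset _ _)
            _ = M := by rw [Nat.card_Icc]; omega
        exact_mod_cast this
      have hCN : (0:ℝ) ≤ (C:ℝ)*N*(Bc k') := by positivity
      nlinarith [Bc_pos k']
    have hNpos : (0:ℝ) < N := by exact_mod_cast hN1
    have hMcast : (M:ℝ) = 2*(C:ℝ)*(N:ℝ) := by rw [hM]; push_cast; ring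
    have hMH : (M:ℝ) ≤ 2*C*H := by
      rw [hMcast]; nlinarith
    calc ∑ h ∈ Icc 1 N, totientRatio (a*(h:ℤ)+b)^k'
        ≤ ∑ d ∈ U, gfun k' d * (((Icc 1 N).filter (fun h : ℕ => (d:ℤ) ∣ a*(h:ℤ)+b)).card : ℝ) :=
          step2
      _ ≤ ∑ d ∈ U, ((C:ℝ)*N*(Bc k')*((d:ℝ)^(-(3/2):ℝ)) + Bc k') := Finset.sum_le_sum step3
      _ ≤ (C:ℝ)*N*(Bc k')*Tc + Bc k' * M := hsum3
      _ ≤ (C:ℝ)*H*(Bc k')*Tc + Bc k' * (2*C*H) := by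
          have hCN0 : (0:ℝ) ≤ C := by linarith
          have h1 : (C:ℝ)*N*(Bc k')*Tc ≤ (C:ℝ)*H*(Bc k')*Tc := by
            apply mul_le_mul_of_nonneg_right ?_ hTc
            apply mul_le_mul_of_nonneg_right ?_ hBc.le
            exact mul_le_mul_of_nonneg_left hNH hCN0
          have h2 : Bc k' * (M:ℝ) ≤ Bc k' * (2*C*H) := mul_le_mul_of_nonneg_left hMH hBc.le
          linarith
      _ ≤ K1 C k' * H := by
          unfold K1
          have hp : (0:ℝ) < (C:ℝ)^k' := by positivity
          have hH1 : (0:ℝ) < H := by linarith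
          have hexp : ((C:ℝ)^k' + (C:ℝ)*(Bc k')*Tc + 2*(C:ℝ)*(Bc k')) * H
              = (C:ℝ)^k'*H + (C:ℝ)*H*(Bc k')*Tc + Bc k' * (2*C*H) := by ring
          rw [hexp]
          linarith [mul_pos hp hH1]


lemma prod_pow_le_sum_pow (r k : ℕ) (hr : 1 ≤ r) (x : Fin r → ℝ) (hx : ∀ i, 0 ≤ x i) :
    ∏ i, (x i)^k ≤ ∑ i, (x i)^(r*k) := by
  haveI : NeZero r := ⟨by omega⟩
  obtain ⟨j, -, hj⟩ := Finset.exists_max_image (univ : Finset (Fin r)) x ⟨0, mem_univ 0⟩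
  calc ∏ i, (x i)^k ≤ ∏ _i : Fin r, (x j)^k :=
        Finset.prod_le_prod (fun i _ => pow_nonneg (hx i) k)
          (fun i _ => pow_le_pow_left₀ (hx i) (hj i (mem_univ i)) k)
    _ = (x j)^(r*k) := by
        rw [Finset.prod_const, card_univ, Fintype.card_fin, ← pow_mul, mul_comm]
    _ ≤ ∑ i, (x i)^(r*k) := Finset.single_le_sum (fun i _ => pow_nonneg (hx i) _) (mem_univ j)

/-- **Lemma 2.5.** Let `H ≥ 1` and `C, k, r ≥ 1` be fixed. Then
`∑_{h≤H} ∏_{i=1}^r (|L_i(h)|/φ(|L_i(h)|))^k ≪_{r,k,C} H`, uniformly over all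
linear functions `L_i(h) = a_i·h + b_i` with integer coefficients
`a_i, b_i ∈ [−C, C]`. -/
theorem totient_ratio_linear_forms_bound (C k r : ℕ) (hC : 1 ≤ C) (hk : 1 ≤ k)
    (hr : 1 ≤ r) :
    ∃ K : ℝ, 0 < K ∧ ∀ H : ℝ, 1 ≤ H → ∀ a b : Fin r → ℤ,
      (∀ i, |a i| ≤ (C : ℤ)) → (∀ i, |b i| ≤ (C : ℤ)) →
      ∑ h ∈ Icc 1 ⌊H⌋₊, ∏ i : Fin r, totientRatio (a i * (h : ℤ) + b i) ^ k
        ≤ K * H := by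
  have hk'1 : 1 ≤ r * k := Nat.one_le_iff_ne_zero.2 (by positivity)
  refine ⟨(r:ℝ) * K1 C (r*k), ?_, ?_⟩
  · have h1 := K1_pos C (r*k) hC
    have h2 : (0:ℝ) < r := by exact_mod_cast hr
    positivity
  · intro H hH a b hA hB
    have hH0 : (0:ℝ) ≤ H := by linarith
    calc ∑ h ∈ Icc 1 ⌊H⌋₊, ∏ i : Fin r, totientRatio (a i * (h:ℤ) + b i) ^ k
        ≤ ∑ h ∈ Icc 1 ⌊H⌋₊, ∑ i : Fin r, totientRatio (a i * (h:ℤ) + b i) ^ (r*k) := by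
          apply Finset.sum_le_sum
          intro h _
          exact prod_pow_le_sum_pow r k hr _ (fun i => tr_nonneg _)
      _ = ∑ i : Fin r, ∑ h ∈ Icc 1 ⌊H⌋₊, totientRatio (a i * (h:ℤ) + b i) ^ (r*k) :=
          Finset.sum_comm
      _ ≤ ∑ _i : Fin r, K1 C (r*k) * H := by
          apply Finset.sum_le_sum
          intro i _
          exact single_form C (r*k) hC hk'1 H hH (a i) (b i) (hA i) (hB i)
      _ = (r:ℝ) * K1 C (r*k) * H := by
          rw [Finset.sum_const, card_univ, Fintype.card_fin, nsmul_eq_mul]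
          ring
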